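/- arXiv:1604.05678 — 2 statements merged into one kernel-verified Lean document; each statement's English description precedes it below -/
import Mathlib

section
/- Let F be a field and let A = ⊕_{i≥1} A_i be an associative F-algebra graded by positive integers (A_i A_j ⊆ A_{i+j}) and generated by elements x_1, …, x_m of degree 1. Let L be the Lie subalgebra of A (with bracket ⁅u, v⁆ = uv − vu) generated by x_1, …, x_m. Suppose there are k ≥ 1 and scalars α_σ ∈ F indexed by the permutations σ of {1, …, k}, with α_id = 1, such that Σ_σ α_σ a_{σ(1)} a_{σ(2)} ⋯ a_{σ(k)} = 0 for all a_1, …, a_k ∈ L. Define h_k(a_1, …, a_{k−1}) = Σ_{σ : σ(k)=k} α_σ a_{σ(1)} ⋯ a_{σ(k−1)}. Let M be the two-sided ideal of A generated by all values h_k(a_1, …, a_{k−1}) with a_1, …, a_{k−1} ∈ L, and suppose d ≥ 1 satisfies A^d ⊆ M. Then for every a ∈ L, the set A^d·a is contained in the F-linear span of the elements x_{i_1} x_{i_2} ⋯ x_{i_t}·a and x_{i_1} x_{i_2} ⋯ x_{i_t}·a·u, where 0 ≤ t ≤ d−1, 1 ≤ i_1, …, i_t ≤ m, and u ∈ A. 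-/
/-- Product of a nonempty list in a nonunital ring (empty list is sent to `0`). -/
def prodList {A : Type*} [Mul A] [Zero A] : List A → A
  | [] => 0
  | h :: t => t.foldl (· * ·) h

/-- Membership in the Lie subalgebra of an associative algebra `A` (with commutator bracket)
generated by the elements `x i`. -/
inductive InLieGen {F A : Type*} [Field F] [NonUnitalRing A] [Module F A]
    {m : ℕ} (x : Fin m → A) : A → Prop
  | gen (i : Fin m) : InLieGen x (x i)
  | add {u v : A} : InLieGen x u → InLieGen x v → InLieGen x (u + v)
  | smul (c : F) {u : A} : InLieGen x u → InLieGen x (c • u)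
  | br {u v : A} : InLieGen x u → InLieGen x v → InLieGen x (u * v - v * u)

/-- Membership in the (associative, non-unital) subalgebra of `A` generated by the `x i`. -/
inductive InAssocGen {F A : Type*} [Field F] [NonUnitalRing A] [Module F A]
    {m : ℕ} (x : Fin m → A) : A → Prop
  | gen (i : Fin m) : InAssocGen x (x i)
  | add {u v : A} : InAssocGen x u → InAssocGen x v → InAssocGen x (u + v)
  | smul (c : F) {u : A} : InAssocGen x u → InAssocGen x (c • u)
  | mul {u v : A} : InAssocGen x u → InAssocGen x v → InAssocGen x (u * v)

/-- `h_k(a_1, …, a_{k-1}) = Σ_{σ(k) = k} α_σ a_{σ(1)} ⋯ a_{σ(k-1)}`. -/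
noncomputable def hkPoly {F A : Type*} [Field F] [NonUnitalRing A] [Module F A]
    (k : ℕ) (hk : 1 ≤ k) (α : Equiv.Perm (Fin k) → F) (a : Fin (k - 1) → A) : A :=
  ∑ σ ∈ Finset.univ.filter
      (fun σ : Equiv.Perm (Fin k) => σ ⟨k - 1, by omega⟩ = ⟨k - 1, by omega⟩),
    α σ • prodList (List.ofFn fun i : Fin (k - 1) =>
      (fun j : Fin k => if h : (j : ℕ) < k - 1 then a ⟨(j : ℕ), h⟩ else 0)
        (σ ⟨(i : ℕ), by omega⟩))

/-- `x_{i₁} x_{i₂} ⋯ x_{i_t} · a`, for a list of indices `l = [i₁, …, i_t]`. -/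
def monApply {A : Type*} [Mul A] {m : ℕ} (x : Fin m → A) (l : List (Fin m)) (a : A) : A :=
  l.foldr (fun i acc => x i * acc) a


set_option linter.unusedSectionVars false
set_option maxHeartbeats 1000000

section Aux
variable {F A : Type*} [Field F] [NonUnitalRing A] [Module F A]
  [SMulCommClass F A A] [IsScalarTower F A A]

variable {F A : Type*} [Field F] [NonUnitalRing A] [Module F A]
  [SMulCommClass F A A] [IsScalarTower F A A]

theorem foldl_mul_assoc (l : List A) (u v : A) :
    l.foldl (· * ·) (u * v) = u * l.foldl (· * ·) v := by
  induction l generalizing v with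
  | nil => rfl
  | cons h t ih => simpa [mul_assoc] using ih (v * h)

theorem prodList_cons (h : A) {t : List A} (ht : t ≠ []) :
    prodList (h :: t) = h * prodList t := by
  obtain ⟨h2, t2, rfl⟩ := List.exists_cons_of_ne_nil ht
  show (h2 :: t2).foldl (· * ·) h = _
  show t2.foldl (· * ·) (h * h2) = _
  rw [foldl_mul_assoc]; rfl

theorem prodList_append {l1 l2 : List A} (h1 : l1 ≠ []) (h2 : l2 ≠ []) :
    prodList (l1 ++ l2) = prodList l1 * prodList l2 := by
  induction l1 with
  | nil => simp at h1
  | cons h t ih =>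
    rcases eq_or_ne t [] with rfl | ht
    · simp only [List.cons_append, List.nil_append]
      rw [prodList_cons h h2]; rfl
    · have : (t ++ l2) ≠ [] := by simp [ht]
      rw [List.cons_append, prodList_cons h this, ih ht, prodList_cons h ht, mul_assoc]

theorem prodList_concat {l : List A} (hl : l ≠ []) (u : A) :
    prodList (l ++ [u]) = prodList l * u := by
  rw [prodList_append hl (by simp)]; rfl

-- foldl distributes
theorem foldl_mul_add (l : List A) (u v : A) :
    l.foldl (· * ·) (u + v) = l.foldl (· * ·) u + l.foldl (· * ·) v := by
  induction l generalizing u v with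
  | nil => rfl
  | cons h t ih => simpa [add_mul] using ih (u * h) (v * h)

theorem foldl_mul_smul (l : List A) (c : F) (u : A) :
    l.foldl (· * ·) (c • u) = c • l.foldl (· * ·) u := by
  induction l generalizing u with
  | nil => rfl
  | cons h t ih => simpa [smul_mul_assoc] using ih (u * h)

theorem foldl_mul_zero (l : List A) : l.foldl (· * ·) (0 : A) = 0 := by
  induction l with
  | nil => rfl
  | cons h t ih => simpa using ih

theorem prodList_set_add (l : List A) (p : ℕ) (hp : p < l.length) (u v : A) :
    prodList (l.set p (u + v)) = prodList (l.set p u) + prodList (l.set p v) := by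
  induction l generalizing p with
  | nil => simp at hp
  | cons h t ih =>
    cases p with
    | zero => simpa [prodList] using foldl_mul_add t u v
    | succ p =>
      have hp' : p < t.length := by simpa using hp
      have hne : ∀ y : A, t.set p y ≠ [] := fun y => by
        simp [← List.length_pos_iff_ne_nil]; omega
      simp only [List.set_cons_succ]
      rw [prodList_cons h (hne _), prodList_cons h (hne _), prodList_cons h (hne _),
        ih p hp', mul_add]

theorem prodList_set_smul (l : List A) (p : ℕ) (hp : p < l.length) (c : F) (u : A) :
    prodList (l.set p (c • u)) = c • prodList (l.set p u) := by
  induction l generalizing p with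
  | nil => simp at hp
  | cons h t ih =>
    cases p with
    | zero => simpa [prodList] using foldl_mul_smul t c u
    | succ p =>
      have hp' : p < t.length := by simpa using hp
      have hne : ∀ y : A, t.set p y ≠ [] := fun y => by
        simp [← List.length_pos_iff_ne_nil]; omega
      simp only [List.set_cons_succ]
      rw [prodList_cons h (hne _), prodList_cons h (hne _), ih p hp', mul_smul_comm]

theorem prodList_set_zero (l : List A) (p : ℕ) (hp : p < l.length) :
    prodList (l.set p (0 : A)) = 0 := by
  induction l generalizing p with
  | nil => simp at hp
  | cons h t ih =>
    cases p with
    | zero => simpa [prodList] using foldl_mul_zero t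
    | succ p =>
      have hp' : p < t.length := by simpa using hp
      have hne : (t.set p (0:A)) ≠ [] := by
        simp [← List.length_pos_iff_ne_nil]; omega
      simp only [List.set_cons_succ]
      rw [prodList_cons h hne, ih p hp', mul_zero]

-- commutator Leibniz
theorem prodList_comm (c : A) : ∀ (l : List A), l ≠ [] →
    prodList l * c - c * prodList l =
      ∑ p : Fin l.length, prodList (l.set p (l.get p * c - c * l.get p)) := by
  intro l
  induction l with
  | nil => simp
  | cons h t ih =>
    intro _
    rcases eq_or_ne t [] with rfl | ht
    · simp [prodList, List.set]
    · have hne : ∀ (p : ℕ) (y : A), t.set p y ≠ [] := fun p y => by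
        have := List.length_pos_iff_ne_nil.mpr ht
        simp [← List.length_pos_iff_ne_nil]; omega
      have key : ∀ p : Fin t.length,
          prodList ((h :: t).set (p.1 + 1) (t.get p * c - c * t.get p))
            = h * prodList (t.set p (t.get p * c - c * t.get p)) := by
        intro p; simp only [List.set_cons_succ]; exact prodList_cons h (hne _ _)
      rw [prodList_cons h ht]
      have hsum : ∑ p : Fin (h :: t).length,
          prodList ((h :: t).set p ((h :: t).get p * c - c * (h :: t).get p))
          = prodList ((h * c - c * h) :: t)
            + ∑ p : Fin t.length, (h * prodList (t.set p (t.get p * c - c * t.get p))) := by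
        simp only [List.length_cons]
        rw [Fin.sum_univ_succ]
        congr 1
        refine Finset.sum_congr rfl fun p _ => ?_
        have : ((h :: t).set (p.succ) (((h :: t).get p.succ) * c - c * ((h :: t).get p.succ)))
            = h :: t.set p (t.get p * c - c * t.get p) := rfl
        rw [this]
        exact prodList_cons h (hne _ _)
      rw [hsum, ← Finset.mul_sum, ← ih ht, prodList_cons _ ht]
      noncomm_ring

theorem ofFn_update {r : ℕ} (g : Fin r → A) (p : Fin r) (y : A) :
    List.ofFn (Function.update g p y) = (List.ofFn g).set p y := by
  apply List.ext_getElem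
  · simp
  · intro i h1 h2
    simp only [List.getElem_ofFn, List.getElem_set]
    by_cases h : (p : ℕ) = i
    · rw [if_pos h]
      have : (⟨i, by simpa using h1⟩ : Fin r) = p := Fin.ext h.symm
      rw [this, Function.update_self]
    · rw [if_neg h, Function.update_of_ne]
      intro hc
      exact h (by rw [← hc])

def restrFun (K : ℕ) (σ : Equiv.Perm (Fin (K+1))) (i : Fin K) : Fin K :=
  if h : (σ i.castSucc : ℕ) < K then ⟨σ i.castSucc, h⟩ else i

theorem restr_lt {K : ℕ} {σ : Equiv.Perm (Fin (K+1))} (hσ : σ (Fin.last K) = Fin.last K)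
    (i : Fin K) : ((σ i.castSucc : Fin (K+1)) : ℕ) < K := by
  have h1 : σ i.castSucc ≠ Fin.last K := by
    intro h
    exact absurd (σ.injective (h.trans hσ.symm)) (Fin.ne_last_of_lt (Fin.castSucc_lt_last i))
  have := (σ i.castSucc).isLt
  rcases lt_or_eq_of_le (Nat.lt_succ_iff.mp this) with h | h
  · exact h
  · exact absurd (Fin.ext h) h1

theorem restrFun_val {K : ℕ} {σ : Equiv.Perm (Fin (K+1))} (hσ : σ (Fin.last K) = Fin.last K)
    (i : Fin K) : ((restrFun K σ i : Fin K) : ℕ) = ((σ i.castSucc : Fin (K+1)) : ℕ) := by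
  rw [restrFun, dif_pos (restr_lt hσ i)]

theorem restrFun_bij {K : ℕ} {σ : Equiv.Perm (Fin (K+1))} (hσ : σ (Fin.last K) = Fin.last K) :
    Function.Bijective (restrFun K σ) := by
  rw [Fintype.bijective_iff_injective_and_card]
  refine ⟨fun i j hij => ?_, rfl⟩
  have : ((σ i.castSucc : Fin (K+1)) : ℕ) = ((σ j.castSucc : Fin (K+1)) : ℕ) := by
    rw [← restrFun_val hσ i, ← restrFun_val hσ j, hij]
  have := σ.injective (Fin.ext this)
  exact Fin.castSucc_injective K this

/-- normal form for `hkPoly (K+1)`. -/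
theorem hkPoly_eq {K : ℕ} (hk : 1 ≤ K + 1) (α : Equiv.Perm (Fin (K+1)) → F) (b : Fin K → A) :
    hkPoly (K+1) hk α b = ∑ σ ∈ Finset.univ.filter
        (fun σ : Equiv.Perm (Fin (K+1)) => σ (Fin.last K) = Fin.last K),
      α σ • prodList (List.ofFn fun i : Fin K => b (restrFun K σ i)) := by
  rw [hkPoly]
  refine Finset.sum_congr ?_ (fun σ hσ => ?_)
  · congr 1
  · simp only [Finset.mem_filter] at hσ
    congr 1
    refine congrArg prodList (congrArg List.ofFn (funext fun i => ?_))
    show (if h : ((σ ⟨(i:ℕ), by omega⟩ : Fin (K+1)) : ℕ) < K + 1 - 1 then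
        b ⟨((σ ⟨(i:ℕ), by omega⟩ : Fin (K+1)) : ℕ), h⟩ else 0) = b (restrFun K σ i)
    have hcast : (⟨(i:ℕ), by omega⟩ : Fin (K+1)) = Fin.castSucc i := Fin.ext rfl
    rw [hcast]
    simp only [Nat.add_sub_cancel]
    rw [dif_pos (restr_lt hσ.2 i)]
    congr 1
    exact Fin.ext (restrFun_val hσ.2 i).symm

theorem prodList_nil : prodList ([] : List A) = 0 := rfl

theorem prodList_comm_ofFn {r : ℕ} (hr : r ≠ 0) (g : Fin r → A) (c : A) :
    prodList (List.ofFn g) * c - c * prodList (List.ofFn g)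
      = ∑ p : Fin r, prodList (List.ofFn (Function.update g p (g p * c - c * g p))) := by
  have hne : List.ofFn g ≠ [] := by
    simp [← List.length_pos_iff_ne_nil]; omega
  rw [prodList_comm c (List.ofFn g) hne]
  have hlen : (List.ofFn g).length = r := by simp
  refine Finset.sum_equiv (finCongr hlen) (by simp) (fun p _ => ?_)
  have hget : (List.ofFn g).get p = g (finCongr hlen p) := by
    simp [List.get_ofFn]
    congr 1
  rw [hget, ofFn_update]
  congr 1

theorem hkPoly_update_add {K : ℕ} (hk : 1 ≤ K + 1) (α : Equiv.Perm (Fin (K+1)) → F)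
    (b : Fin K → A) (j : Fin K) (u v : A) :
    hkPoly (K+1) hk α (Function.update b j (u+v))
      = hkPoly (K+1) hk α (Function.update b j u) + hkPoly (K+1) hk α (Function.update b j v) := by
  rw [hkPoly_eq, hkPoly_eq, hkPoly_eq, ← Finset.sum_add_distrib]
  refine Finset.sum_congr rfl fun σ hσ => ?_
  have hσ' := (Finset.mem_filter.mp hσ).2
  obtain ⟨p0, hp0⟩ := (restrFun_bij hσ').surjective j
  have key : ∀ y : A, (fun i => Function.update b j y (restrFun K σ i))
      = Function.update (fun i => b (restrFun K σ i)) p0 y := by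
    intro y; funext i
    by_cases hi : i = p0
    · subst hi; rw [hp0, Function.update_self, Function.update_self]
    · rw [Function.update_of_ne hi, Function.update_of_ne]
      intro hc
      exact hi ((restrFun_bij hσ').injective (hc.trans hp0.symm))
  simp only [key, ofFn_update]
  have hlen : (p0 : ℕ) < (List.ofFn fun i => b (restrFun K σ i)).length := by simp
  rw [prodList_set_add _ _ hlen, smul_add]

theorem hkPoly_update_smul {K : ℕ} (hk : 1 ≤ K + 1) (α : Equiv.Perm (Fin (K+1)) → F)
    (b : Fin K → A) (j : Fin K) (c : F) (u : A) :
    hkPoly (K+1) hk α (Function.update b j (c • u))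
      = c • hkPoly (K+1) hk α (Function.update b j u) := by
  rw [hkPoly_eq, hkPoly_eq, Finset.smul_sum]
  refine Finset.sum_congr rfl fun σ hσ => ?_
  have hσ' := (Finset.mem_filter.mp hσ).2
  obtain ⟨p0, hp0⟩ := (restrFun_bij hσ').surjective j
  have key : ∀ y : A, (fun i => Function.update b j y (restrFun K σ i))
      = Function.update (fun i => b (restrFun K σ i)) p0 y := by
    intro y; funext i
    by_cases hi : i = p0
    · subst hi; rw [hp0, Function.update_self, Function.update_self]
    · rw [Function.update_of_ne hi, Function.update_of_ne]
      intro hc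
      exact hi ((restrFun_bij hσ').injective (hc.trans hp0.symm))
  simp only [key, ofFn_update]
  have hlen : (p0 : ℕ) < (List.ofFn fun i => b (restrFun K σ i)).length := by simp
  rw [prodList_set_smul _ _ hlen, smul_comm]

theorem hkPoly_comm {K : ℕ} (hK : K ≠ 0) (hk : 1 ≤ K + 1) (α : Equiv.Perm (Fin (K+1)) → F)
    (b : Fin K → A) (c : A) :
    hkPoly (K+1) hk α b * c - c * hkPoly (K+1) hk α b
      = ∑ j : Fin K, hkPoly (K+1) hk α (Function.update b j (b j * c - c * b j)) := by
  have pereq : ∀ j : Fin K, hkPoly (K+1) hk α (Function.update b j (b j * c - c * b j))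
      = ∑ σ ∈ Finset.univ.filter
        (fun σ : Equiv.Perm (Fin (K+1)) => σ (Fin.last K) = Fin.last K),
        α σ • prodList (List.ofFn fun i : Fin K =>
          (Function.update b j (b j * c - c * b j)) (restrFun K σ i)) := fun j => hkPoly_eq hk α _
  simp only [pereq]
  rw [hkPoly_eq, Finset.sum_comm, Finset.sum_mul, Finset.mul_sum, ← Finset.sum_sub_distrib]
  refine Finset.sum_congr rfl fun σ hσ => ?_
  have hσ' := (Finset.mem_filter.mp hσ).2
  rw [smul_mul_assoc, mul_smul_comm, ← smul_sub,
    prodList_comm_ofFn hK (fun i => b (restrFun K σ i)) c, Finset.smul_sum]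
  refine Finset.sum_bijective _ (restrFun_bij hσ') (by simp) (fun p _ => ?_)
  refine congrArg (fun z : Fin K → A => α σ • prodList (List.ofFn z)) (funext fun i => ?_)
  by_cases hi : i = p
  · subst hi
    rw [Function.update_self, Function.update_self]
  · rw [Function.update_of_ne hi, Function.update_of_ne]
    intro hc
    exact hi ((restrFun_bij hσ').injective hc)

theorem prodList_pairs_mem (Agr : ℕ → Submodule F A)
    (hmul : ∀ i j : ℕ, ∀ u ∈ Agr i, ∀ v ∈ Agr j, u * v ∈ Agr (i + j)) :
    ∀ (l : List (A × ℕ)), (∀ e ∈ l, e.1 ∈ Agr e.2) →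
      prodList (l.map Prod.fst) ∈ Agr ((l.map Prod.snd).sum) := by
  intro l
  induction l with
  | nil => intro _; simpa [prodList_nil] using (Agr 0).zero_mem
  | cons e t ih =>
    intro hmem
    rcases eq_or_ne t [] with rfl | ht
    · simpa [prodList] using hmem e (by simp)
    · have htne : t.map Prod.fst ≠ [] := by simpa using ht
      simp only [List.map_cons, List.sum_cons]
      rw [prodList_cons _ htne]
      exact hmul _ _ _ (hmem e (by simp)) _ (ih (fun e' he' => hmem e' (by simp [he'])))

theorem prodList_ofFn_mem (Agr : ℕ → Submodule F A)
    (hmul : ∀ i j : ℕ, ∀ u ∈ Agr i, ∀ v ∈ Agr j, u * v ∈ Agr (i + j))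
    {r : ℕ} (g : Fin r → A) (ν : Fin r → ℕ) (hg : ∀ i, g i ∈ Agr (ν i)) :
    prodList (List.ofFn g) ∈ Agr (∑ i, ν i) := by
  have := prodList_pairs_mem Agr hmul (List.ofFn fun i => (g i, ν i)) (by
    intro e he
    simp only [List.mem_ofFn] at he
    obtain ⟨i, rfl⟩ := he
    exact hg i)
  simpa [List.map_ofFn, Function.comp_def, List.sum_ofFn] using this

theorem hkPoly_mem (Agr : ℕ → Submodule F A)
    (hmul : ∀ i j : ℕ, ∀ u ∈ Agr i, ∀ v ∈ Agr j, u * v ∈ Agr (i + j))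
    {K : ℕ} (hk : 1 ≤ K + 1) (α : Equiv.Perm (Fin (K+1)) → F)
    (b : Fin K → A) (nb : Fin K → ℕ) (hb : ∀ i, b i ∈ Agr (nb i)) :
    hkPoly (K+1) hk α b ∈ Agr (∑ i, nb i) := by
  rw [hkPoly_eq]
  refine Submodule.sum_mem _ fun σ hσ => Submodule.smul_mem _ _ ?_
  have hσ' := (Finset.mem_filter.mp hσ).2
  have hsum : ∑ i, nb (restrFun K σ i) = ∑ i, nb i := by
    exact Fintype.sum_bijective _ (restrFun_bij hσ') _ _ (fun i => rfl)
  rw [← hsum]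
  exact prodList_ofFn_mem Agr hmul _ _ (fun i => hb _)

def monL {m : ℕ} (x : Fin m → A) (l : List (Fin m)) : A := prodList (l.map x)

section Mon
variable {m : ℕ} (x : Fin m → A)

theorem monL_singleton (j : Fin m) : monL x [j] = x j := rfl

theorem monL_cons (j : Fin m) {t : List (Fin m)} (ht : t ≠ []) :
    monL x (j :: t) = x j * monL x t := by
  rw [monL, List.map_cons]
  exact prodList_cons _ (by simpa using ht)

theorem monL_append {l1 l2 : List (Fin m)} (h1 : l1 ≠ []) (h2 : l2 ≠ []) :
    monL x (l1 ++ l2) = monL x l1 * monL x l2 := by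
  rw [monL, List.map_append]
  exact prodList_append (by simpa using h1) (by simpa using h2)

theorem monApply_cons (j : Fin m) (l : List (Fin m)) (a : A) :
    monApply x (j :: l) a = x j * monApply x l a := rfl

theorem monApply_eq (a : A) : ∀ {l : List (Fin m)}, l ≠ [] → monApply x l a = monL x l * a := by
  intro l
  induction l with
  | nil => simp
  | cons j t ih =>
    intro _
    rcases eq_or_ne t [] with rfl | ht
    · rfl
    · rw [monApply_cons, ih ht, monL_cons x j ht, mul_assoc]

theorem monL_monApply (a : A) {l1 : List (Fin m)} (h1 : l1 ≠ []) (l2 : List (Fin m)) :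
    monL x l1 * monApply x l2 a = monApply x (l1 ++ l2) a := by
  induction l1 with
  | nil => simp at h1
  | cons j t ih =>
    rcases eq_or_ne t [] with rfl | ht
    · rfl
    · rw [monL_cons x j ht, mul_assoc, ih ht, List.cons_append, monApply_cons]

variable (Agr : ℕ → Submodule F A)
  (hmul : ∀ i j : ℕ, ∀ u ∈ Agr i, ∀ v ∈ Agr j, u * v ∈ Agr (i + j))
  (hdeg : ∀ i, x i ∈ Agr 1)

include hmul hdeg in
theorem monL_mem : ∀ {l : List (Fin m)}, l ≠ [] → monL x l ∈ Agr l.length := by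
  intro l
  induction l with
  | nil => simp
  | cons j t ih =>
    intro _
    rcases eq_or_ne t [] with rfl | ht
    · simpa [monL, prodList] using hdeg j
    · rw [monL_cons x j ht]
      have := hmul 1 t.length _ (hdeg j) _ (ih ht)
      simpa [add_comm] using this

end Mon

/-- monomials of length ≥ t (and ≥ 1) -/
def MgeSet {m : ℕ} (x : Fin m → A) (t : ℕ) : Set A :=
  {z | ∃ l : List (Fin m), l ≠ [] ∧ t ≤ l.length ∧ z = monL x l}

/-- monomials of length exactly n -/
def MexSet {m : ℕ} (x : Fin m → A) (n : ℕ) : Set A :=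
  {z | ∃ l : List (Fin m), l.length = n ∧ z = monL x l}

section Spans
variable {m : ℕ} (x : Fin m → A)

theorem span_mge_mul {s t : ℕ} {u v : A} (hu : u ∈ Submodule.span F (MgeSet x s))
    (hv : v ∈ Submodule.span F (MgeSet x t)) :
    u * v ∈ Submodule.span F (MgeSet x (s + t)) := by
  induction hu using Submodule.span_induction with
  | mem u hu =>
    induction hv using Submodule.span_induction with
    | mem v hv =>
      obtain ⟨l1, h1, hl1, rfl⟩ := hu
      obtain ⟨l2, h2, hl2, rfl⟩ := hv
      refine Submodule.subset_span ⟨l1 ++ l2, by simp [h1], ?_, (monL_append x h1 h2).symm⟩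
      rw [List.length_append]; omega
    | zero => rw [mul_zero]; exact Submodule.zero_mem _
    | add v w _ _ ihv ihw => rw [mul_add]; exact Submodule.add_mem _ ihv ihw
    | smul c v _ ihv => rw [mul_smul_comm]; exact Submodule.smul_mem _ _ ihv
  | zero => rw [zero_mul]; exact Submodule.zero_mem _
  | add u w _ _ ihu ihw => rw [add_mul]; exact Submodule.add_mem _ ihu ihw
  | smul c u _ ihu => rw [smul_mul_assoc]; exact Submodule.smul_mem _ _ ihu

theorem span_mge_mono {s t : ℕ} (h : s ≤ t) :
    Submodule.span F (MgeSet x t) ≤ Submodule.span F (MgeSet x s) :=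
  Submodule.span_mono (fun z => by rintro ⟨l, h1, h2, rfl⟩; exact ⟨l, h1, by omega, rfl⟩)

theorem gen_mem_span_mge (hgen : ∀ u : A, InAssocGen (F := F) x u) (u : A) :
    u ∈ Submodule.span F (MgeSet x 1) := by
  induction hgen u with
  | gen i => exact Submodule.subset_span ⟨[i], by simp, by simp, rfl⟩
  | add _ _ ihu ihv => exact Submodule.add_mem _ ihu ihv
  | smul c _ ihu => exact Submodule.smul_mem _ _ ihu
  | mul _ _ ihu ihv =>
    exact span_mge_mono x (by omega) (span_mge_mul x ihu ihv)

end Spans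

section Proj
variable (Agr : ℕ → Submodule F A)

theorem mem_span_homog (hinternal : DirectSum.IsInternal Agr)
    (s : Set A) (hs : ∀ z ∈ s, ∃ j, z ∈ Agr j) {n : ℕ} {w : A}
    (hw : w ∈ Submodule.span F s) (hwn : w ∈ Agr n) :
    w ∈ Submodule.span F (s ∩ {z | z ∈ Agr n}) := by
  have ind : iSupIndep Agr := hinternal.submodule_iSupIndep
  set Q : Submodule F A := ⨆ j, ⨆ (_ : j ≠ n), Agr j with hQ
  have hsub : Submodule.span F s ≤ Submodule.span F (s ∩ {z | z ∈ Agr n}) ⊔ Q := by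
    rw [Submodule.span_le]
    intro g hg
    obtain ⟨j, hj⟩ := hs g hg
    rcases eq_or_ne j n with rfl | hjn
    · exact Submodule.mem_sup_left (Submodule.subset_span ⟨hg, hj⟩)
    · exact Submodule.mem_sup_right (Submodule.mem_iSup_of_mem j
        (Submodule.mem_iSup_of_mem hjn hj))
  obtain ⟨p, hp, q, hq, hpq⟩ := Submodule.mem_sup.mp (hsub hw)
  have hpn : p ∈ Agr n := by
    have : Submodule.span F (s ∩ {z | z ∈ Agr n}) ≤ Agr n := by
      rw [Submodule.span_le]; exact fun z hz => hz.2
    exact this hp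
  have hq0 : q = 0 := by
    have hqn : q ∈ Agr n := by
      have : q = w - p := by rw [← hpq]; abel
      rw [this]; exact Submodule.sub_mem _ hwn hpn
    exact (Submodule.disjoint_def.mp (ind n)) q hqn hq
  rw [← hpq, hq0, add_zero]
  exact hp

variable {m : ℕ} (x : Fin m → A)
  (hmul : ∀ i j : ℕ, ∀ u ∈ Agr i, ∀ v ∈ Agr j, u * v ∈ Agr (i + j))
  (hdeg : ∀ i, x i ∈ Agr 1)
  (hgen : ∀ u : A, InAssocGen (F := F) x u)
  (hinternal : DirectSum.IsInternal Agr)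

include hmul hdeg hgen hinternal in
theorem homog_mono {n : ℕ} {w : A} (hw : w ∈ Agr n) :
    w ∈ Submodule.span F (MexSet x n) := by
  have h1 : w ∈ Submodule.span F (MgeSet x 1) := gen_mem_span_mge x hgen w
  have h2 := mem_span_homog Agr hinternal (MgeSet x 1)
    (fun z hz => by
      obtain ⟨l, hl, _, rfl⟩ := hz
      exact ⟨l.length, monL_mem x Agr hmul hdeg hl⟩) h1 hw
  refine Submodule.span_le.mpr (fun z hz => ?_) h2
  obtain ⟨⟨l, hl, _, rfl⟩, hzn⟩ := hz
  rcases eq_or_ne l.length n with he | hne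
  · exact Submodule.subset_span ⟨l, he, rfl⟩
  · have hz1 : monL x l ∈ Agr l.length := monL_mem x Agr hmul hdeg hl
    have ind : iSupIndep Agr := hinternal.submodule_iSupIndep
    have hle : Agr n ≤ ⨆ j, ⨆ (_ : j ≠ l.length), Agr j :=
      le_iSup₂ (f := fun j (_ : j ≠ l.length) => Agr j) n hne.symm
    have hdis : Disjoint (Agr l.length) (Agr n) := (ind l.length).mono_right hle
    have hz0 : monL x l = 0 := Submodule.disjoint_def.mp hdis _ hz1 hzn
    rw [hz0]
    exact Submodule.zero_mem _

end Proj

/-- target forms `x_{i1}⋯x_{it}·a·u` with `t + 1 ≤ N` (`u` ranges over `A`). -/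
def UASet {m : ℕ} (x : Fin m → A) (a : A) (N : ℕ) : Set A :=
  {z | ∃ (l : List (Fin m)) (t : A), l.length + 1 ≤ N ∧ z = monApply x l a * t}

section UA
variable {m : ℕ} (x : Fin m → A) (a : A)
  (Agr : ℕ → Submodule F A)
  (hmul : ∀ i j : ℕ, ∀ u ∈ Agr i, ∀ v ∈ Agr j, u * v ∈ Agr (i + j))
  (hdeg : ∀ i, x i ∈ Agr 1)
  (hgen : ∀ u : A, InAssocGen (F := F) x u)
  (hinternal : DirectSum.IsInternal Agr)

theorem UA_mono {N N' : ℕ} (h : N ≤ N') :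
    Submodule.span F (UASet x a N) ≤ Submodule.span F (UASet x a N') :=
  Submodule.span_mono (fun z => by rintro ⟨l, t, hl, rfl⟩; exact ⟨l, t, by omega, rfl⟩)

theorem UA_xmul {N : ℕ} (j : Fin m) {w : A} (hw : w ∈ Submodule.span F (UASet x a N)) :
    x j * w ∈ Submodule.span F (UASet x a (N + 1)) := by
  induction hw using Submodule.span_induction with
  | mem w hw =>
    obtain ⟨l, t, hl, rfl⟩ := hw
    refine Submodule.subset_span ⟨j :: l, t, by simp; omega, ?_⟩
    rw [monApply_cons, mul_assoc]
  | zero => rw [mul_zero]; exact Submodule.zero_mem _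
  | add u v _ _ ihu ihv => rw [mul_add]; exact Submodule.add_mem _ ihu ihv
  | smul c u _ ihu => rw [mul_smul_comm]; exact Submodule.smul_mem _ _ ihu

theorem UA_rmul {N : ℕ} {w : A} (t' : A) (hw : w ∈ Submodule.span F (UASet x a N)) :
    w * t' ∈ Submodule.span F (UASet x a N) := by
  induction hw using Submodule.span_induction with
  | mem w hw =>
    obtain ⟨l, t, hl, rfl⟩ := hw
    exact Submodule.subset_span ⟨l, t * t', hl, by rw [mul_assoc]⟩
  | zero => rw [zero_mul]; exact Submodule.zero_mem _
  | add u v _ _ ihu ihv => rw [add_mul]; exact Submodule.add_mem _ ihu ihv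
  | smul c u _ ihu => rw [smul_mul_assoc]; exact Submodule.smul_mem _ _ ihu

include hmul hdeg hgen hinternal in
theorem UA_hmul {N ns : ℕ} (hns : 1 ≤ ns) {z w : A} (hz : z ∈ Agr ns)
    (hw : w ∈ Submodule.span F (UASet x a N)) :
    z * w ∈ Submodule.span F (UASet x a (N + ns)) := by
  have hz' : z ∈ Submodule.span F (MexSet x ns) :=
    homog_mono Agr x hmul hdeg hgen hinternal hz
  clear hz
  induction hz' using Submodule.span_induction with
  | mem z hz =>
    obtain ⟨l, hlen, rfl⟩ := hz
    have hlne : l ≠ [] := by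
      rw [← List.length_pos_iff_ne_nil]; omega
    induction hw using Submodule.span_induction with
    | mem w hw =>
      obtain ⟨l2, t, hl2, rfl⟩ := hw
      rw [← mul_assoc, monL_monApply x a hlne l2]
      refine Submodule.subset_span ⟨l ++ l2, t, ?_, rfl⟩
      rw [List.length_append]; omega
    | zero => rw [mul_zero]; exact Submodule.zero_mem _
    | add u v _ _ ihu ihv => rw [mul_add]; exact Submodule.add_mem _ ihu ihv
    | smul c u _ ihu => rw [mul_smul_comm]; exact Submodule.smul_mem _ _ ihu
  | zero => rw [zero_mul]; exact Submodule.zero_mem _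
  | add u v _ _ ihu ihv => rw [add_mul]; exact Submodule.add_mem _ ihu ihv
  | smul c u _ ihu => rw [smul_mul_assoc]; exact Submodule.smul_mem _ _ ihu

include hmul hdeg hgen hinternal in
/-- a product of homogeneous elements, one position being `a` (not the last one),
lands in the target span. -/
theorem prod_with_a_mem : ∀ (r : ℕ) (g : Fin (r+1) → A) (ν : Fin (r+1) → ℕ)
    (p0 : Fin (r+1)), p0 ≠ Fin.last r → g p0 = a → ν p0 = 0 →
    (∀ i, i ≠ p0 → g i ∈ Agr (ν i) ∧ 1 ≤ ν i) →
    prodList (List.ofFn g) ∈ Submodule.span F (UASet x a (∑ i, ν i)) := by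
  intro r
  induction r with
  | zero =>
    intro g ν p0 hp0 _ _ _
    have h01 : (p0 : ℕ) = 0 := by have := p0.isLt; omega
    exact absurd (Fin.ext h01) hp0
  | succ r ih =>
    intro g ν p0 hp0 hga hν0 hother
    have htne : List.ofFn (fun i : Fin (r+1) => g i.succ) ≠ [] := by
      simp [← List.length_pos_iff_ne_nil]
    rw [List.ofFn_succ, prodList_cons _ htne]
    by_cases hp : p0 = 0
    · subst hp
      rw [hga]
      have hlast : Fin.last (r+1) ≠ (0 : Fin (r+2)) := by
        simp [Fin.ext_iff]
      have hge1 : 1 ≤ ∑ i, ν i := by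
        have := (hother (Fin.last (r+1)) (by simpa using hlast)).2
        calc 1 ≤ ν (Fin.last (r+1)) := this
          _ ≤ ∑ i, ν i := Finset.single_le_sum (fun i _ => Nat.zero_le _) (Finset.mem_univ _)
      exact Submodule.subset_span ⟨[], _, by simpa using hge1, rfl⟩
    · obtain ⟨q0, rfl⟩ := Fin.eq_succ_of_ne_zero hp
      have hq0 : q0 ≠ Fin.last r := by
        intro h; subst h
        exact hp0 (Fin.succ_last r)
      have htail := ih (fun i => g i.succ) (fun i => ν i.succ) q0 hq0 hga hν0
        (fun i hi => hother i.succ (fun hc => hi (Fin.succ_injective _ hc)))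
      have h0 := hother 0 (Ne.symm (by simpa using hp))
      have := UA_hmul x a Agr hmul hdeg hgen hinternal h0.2 h0.1 htail
      have hsum : (∑ i : Fin (r+1), ν i.succ) + ν 0 = ∑ i, ν i := by
        conv_rhs => rw [Fin.sum_univ_succ]
        omega
      rwa [hsum] at this

end UA

section Lie
variable {m : ℕ} (x : Fin m → A)
  (Agr : ℕ → Submodule F A)
  (hmul : ∀ i j : ℕ, ∀ u ∈ Agr i, ∀ v ∈ Agr j, u * v ∈ Agr (i + j))
  (hdeg : ∀ i, x i ∈ Agr 1)

/-- homogeneous Lie elements of positive degree -/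
def LHSet : Set A := {v | ∃ nv : ℕ, 1 ≤ nv ∧ v ∈ Agr nv ∧ InLieGen (F := F) x v}

include hmul hdeg in
theorem lie_homog {u : A} (hu : InLieGen (F := F) x u) :
    u ∈ Submodule.span F (LHSet x Agr) := by
  induction hu with
  | gen i => exact Submodule.subset_span ⟨1, le_refl _, hdeg i, InLieGen.gen i⟩
  | add _ _ ihu ihv => exact Submodule.add_mem _ ihu ihv
  | smul c _ ihu => exact Submodule.smul_mem _ _ ihu
  | @br u v hu hv ihu ihv =>
    clear hu hv
    induction ihu using Submodule.span_induction with
    | mem u hu =>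
      induction ihv using Submodule.span_induction with
      | mem v hv =>
        obtain ⟨n1, hn1, hu1, hu2⟩ := hu
        obtain ⟨n2, hn2, hv1, hv2⟩ := hv
        refine Submodule.subset_span ⟨n1 + n2, by omega, ?_, InLieGen.br hu2 hv2⟩
        refine Submodule.sub_mem _ (hmul _ _ _ hu1 _ hv1) ?_
        have := hmul _ _ _ hv1 _ hu1
        rwa [add_comm] at this
      | zero =>
        have : u * 0 - 0 * u = 0 := by simp
        rw [this]; exact Submodule.zero_mem _
      | add v w _ _ ihv ihw =>
        have : u * (v + w) - (v + w) * u = (u * v - v * u) + (u * w - w * u) := by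
          noncomm_ring
        rw [this]; exact Submodule.add_mem _ ihv ihw
      | smul c v _ ihv =>
        have : u * (c • v) - (c • v) * u = c • (u * v - v * u) := by
          rw [mul_smul_comm, smul_mul_assoc, smul_sub]
        rw [this]; exact Submodule.smul_mem _ _ ihv
    | zero =>
      have : (0 : A) * v - v * 0 = 0 := by simp
      rw [this]; exact Submodule.zero_mem _
    | add u w _ _ ihu ihw =>
      have : (u + w) * v - v * (u + w) = (u * v - v * u) + (w * v - v * w) := by
        noncomm_ring
      rw [this]; exact Submodule.add_mem _ ihu ihw
    | smul c u _ ihu =>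
      have : (c • u) * v - v * (c • u) = c • (u * v - v * u) := by
        rw [mul_smul_comm, smul_mul_assoc, smul_sub]
      rw [this]; exact Submodule.smul_mem _ _ ihu

end Lie

/-- a multilinear function of a tuple of elements of a span lies in the span of its
values on tuples of generators. -/
theorem tuple_span {r : ℕ} (f : (Fin r → A) → A)
    (hadd : ∀ (g : Fin r → A) (i : Fin r) (u v : A),
      f (Function.update g i (u + v)) = f (Function.update g i u) + f (Function.update g i v))
    (hsmul : ∀ (g : Fin r → A) (i : Fin r) (c : F) (u : A),
      f (Function.update g i (c • u)) = c • f (Function.update g i u))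
    (s : Set A) (b : Fin r → A) (hb : ∀ i, b i ∈ Submodule.span F s) :
    f b ∈ Submodule.span F {z | ∃ c : Fin r → A, (∀ i, c i ∈ s) ∧ z = f c} := by
  suffices H : ∀ t : Finset (Fin r), ∀ b : Fin r → A, (∀ i, b i ∈ Submodule.span F s) →
      (∀ i, i ∉ t → b i ∈ s) →
      f b ∈ Submodule.span F {z | ∃ c : Fin r → A, (∀ i, c i ∈ s) ∧ z = f c} by
    exact H Finset.univ b hb (fun i hi => absurd (Finset.mem_univ i) hi)
  intro t
  induction t using Finset.induction with
  | empty =>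
    intro b hb hb'
    exact Submodule.subset_span ⟨b, fun i => hb' i (by simp), rfl⟩
  | @insert i0 t hi0 ih =>
    intro b hb hb'
    have key : ∀ y ∈ Submodule.span F s,
        f (Function.update b i0 y) ∈
          Submodule.span F {z | ∃ c : Fin r → A, (∀ i, c i ∈ s) ∧ z = f c} := by
      intro y hy
      induction hy using Submodule.span_induction with
      | mem y hy =>
        refine ih (Function.update b i0 y) (fun i => ?_) (fun i hit => ?_)
        · by_cases hi : i = i0
          · subst hi; rw [Function.update_self]; exact Submodule.subset_span hy
          · rw [Function.update_of_ne hi]; exact hb i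
        · by_cases hi : i = i0
          · subst hi; rw [Function.update_self]; exact hy
          · rw [Function.update_of_ne hi]
            exact hb' i (fun hmem => by
              rcases Finset.mem_insert.mp hmem with h | h
              · exact hi h
              · exact hit h)
      | zero =>
        have h00 : (0 : A) = (0 : F) • (0 : A) := by simp
        rw [h00, hsmul, zero_smul]
        exact Submodule.zero_mem _
      | add u v _ _ ihu ihv => rw [hadd]; exact Submodule.add_mem _ ihu ihv
      | smul c u _ ihu => rw [hsmul]; exact Submodule.smul_mem _ _ ihu
    have := key (b i0) (hb i0)
    rwa [Function.update_eq_self] at this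

theorem val_lt_last {K : ℕ} {j : Fin (K+1)} (h : j ≠ Fin.last K) : (j : ℕ) < K := by
  have hlt := j.isLt
  rcases lt_or_eq_of_le (Nat.lt_succ_iff.mp hlt) with h' | h'
  · exact h'
  · exact absurd (Fin.ext h') h

section Main
variable {m : ℕ} (x : Fin m → A) (a : A)
  (Agr : ℕ → Submodule F A)
  (hmul : ∀ i j : ℕ, ∀ u ∈ Agr i, ∀ v ∈ Agr j, u * v ∈ Agr (i + j))
  (hdeg : ∀ i, x i ∈ Agr 1)
  (hgen : ∀ u : A, InAssocGen (F := F) x u)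
  (hinternal : DirectSum.IsInternal Agr)
  {K : ℕ} (hK : K ≠ 0) (hk : 1 ≤ K + 1) (α : Equiv.Perm (Fin (K+1)) → F)
  (hweak : ∀ c : Fin (K+1) → A, (∀ i, InLieGen (F := F) x (c i)) →
      ∑ σ : Equiv.Perm (Fin (K+1)), α σ • prodList (List.ofFn fun i => c (σ i)) = 0)
  (ha : InLieGen (F := F) x a)

/-- good homogeneous Lie data -/
def GoodB (b : Fin K → A) (nb : Fin K → ℕ) : Prop :=
  ∀ i, (b i ∈ Agr (nb i) ∧ 1 ≤ nb i) ∧ InLieGen (F := F) x (b i)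

include hmul hdeg hgen hinternal hK hweak ha in
theorem hk_mul_a (b : Fin K → A) (nb : Fin K → ℕ) (hb : GoodB x Agr b nb) :
    hkPoly (K+1) hk α b * a ∈ Submodule.span F (UASet x a (∑ i, nb i)) := by
  classical
  set c : Fin (K+1) → A := fun j => if h : (j : ℕ) < K then b ⟨j, h⟩ else a with hc
  have hcpos : ∀ (j : Fin (K+1)) (h : (j : ℕ) < K), c j = b ⟨j, h⟩ := fun j h => dif_pos h
  have hcneg : ∀ (j : Fin (K+1)), ¬(j : ℕ) < K → c j = a := fun j h => dif_neg h
  have hcLie : ∀ j, InLieGen (F := F) x (c j) := by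
    intro j
    by_cases h : (j : ℕ) < K
    · rw [hcpos j h]; exact (hb _).2
    · rw [hcneg j h]; exact ha
  have hclast : c (Fin.last K) = a := hcneg _ (by simp)
  have hid := hweak c hcLie
  rw [← Finset.sum_filter_add_sum_filter_not Finset.univ
    (fun σ : Equiv.Perm (Fin (K+1)) => σ (Fin.last K) = Fin.last K)] at hid
  have hfix : ∑ σ ∈ Finset.univ.filter
      (fun σ : Equiv.Perm (Fin (K+1)) => σ (Fin.last K) = Fin.last K),
      α σ • prodList (List.ofFn fun i => c (σ i)) = hkPoly (K+1) hk α b * a := by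
    rw [hkPoly_eq, Finset.sum_mul]
    refine Finset.sum_congr rfl fun σ hσ => ?_
    have hσ' := (Finset.mem_filter.mp hσ).2
    rw [smul_mul_assoc]
    congr 1
    have hlist : (List.ofFn fun i => c (σ i))
        = (List.ofFn fun i : Fin K => b (restrFun K σ i)) ++ [a] := by
      rw [List.ofFn_succ' (fun i => c (σ i)), List.concat_eq_append]
      congr 1
      · refine congrArg List.ofFn (funext fun i => ?_)
        have hl := restr_lt hσ' i
        show c (σ i.castSucc) = _
        rw [hcpos _ hl]
        congr 1
        exact Fin.ext (restrFun_val hσ' i).symm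
      · rw [hσ', hclast]
    rw [hlist, prodList_concat (by
      simp only [ne_eq, ← List.length_pos_iff_ne_nil, List.length_ofFn]
      omega)]
  rw [hfix] at hid
  have hnonfix : ∑ σ ∈ Finset.univ.filter
      (fun σ : Equiv.Perm (Fin (K+1)) => ¬σ (Fin.last K) = Fin.last K),
      α σ • prodList (List.ofFn fun i => c (σ i))
      ∈ Submodule.span F (UASet x a (∑ i, nb i)) := by
    refine Submodule.sum_mem _ fun σ hσ => Submodule.smul_mem _ _ ?_
    have hσ' := (Finset.mem_filter.mp hσ).2
    set p0 : Fin (K+1) := σ.symm (Fin.last K) with hp0def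
    have hsp0 : σ p0 = Fin.last K := Equiv.apply_symm_apply σ _
    have hp0 : p0 ≠ Fin.last K := by
      intro h
      rw [h] at hsp0
      exact hσ' hsp0
    set ν : Fin (K+1) → ℕ := fun i => if h : ((σ i : Fin (K+1)) : ℕ) < K
      then nb ⟨σ i, h⟩ else 0 with hν
    have hνpos : ∀ (i : Fin (K+1)) (h : ((σ i : Fin (K+1)) : ℕ) < K), ν i = nb ⟨σ i, h⟩ :=
      fun i h => dif_pos h
    have hνneg : ∀ (i : Fin (K+1)), ¬((σ i : Fin (K+1)) : ℕ) < K → ν i = 0 :=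
      fun i h => dif_neg h
    have hsum : ∑ i, ν i = ∑ i, nb i := by
      have hcomp : ∑ i, ν i
          = ∑ j, (if h : ((j : Fin (K+1)) : ℕ) < K then nb ⟨j, h⟩ else 0) :=
        Equiv.sum_comp σ (fun j => if h : ((j : Fin (K+1)) : ℕ) < K then nb ⟨j, h⟩ else 0)
      rw [hcomp, Fin.sum_univ_castSucc]
      have h1 : ∀ j : Fin K, (if h : ((j.castSucc : Fin (K+1)) : ℕ) < K
          then nb ⟨j.castSucc, h⟩ else 0) = nb j := by
        intro j
        rw [dif_pos (by simpa using j.isLt)]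
        rfl
      have h2 : (if h : ((Fin.last K : Fin (K+1)) : ℕ) < K then nb ⟨Fin.last K, h⟩ else 0)
          = 0 := by
        rw [dif_neg (by simp)]
      simp only [h1, h2, add_zero]
    rw [← hsum]
    refine prod_with_a_mem x a Agr hmul hdeg hgen hinternal K (fun i => c (σ i)) ν p0 hp0 ?_ ?_ ?_
    · show c (σ p0) = a
      rw [hsp0, hclast]
    · refine hνneg _ ?_
      rw [hsp0]; simp
    · intro i hi
      have hne : σ i ≠ Fin.last K := by
        intro h
        exact hi (by rw [hp0def, ← h, Equiv.symm_apply_apply])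
      have hlt : ((σ i : Fin (K+1)) : ℕ) < K := val_lt_last hne
      constructor
      · show c (σ i) ∈ Agr (ν i)
        rw [hcpos _ hlt, hνpos _ hlt]
        exact ((hb _).1).1
      · rw [hνpos _ hlt]
        exact ((hb _).1).2
  have : hkPoly (K+1) hk α b * a = -(∑ σ ∈ Finset.univ.filter
      (fun σ : Equiv.Perm (Fin (K+1)) => ¬σ (Fin.last K) = Fin.last K),
      α σ • prodList (List.ofFn fun i => c (σ i))) := by
    rw [eq_neg_iff_add_eq_zero]
    exact hid
  rw [this]
  exact Submodule.neg_mem _ hnonfix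

include hmul hdeg hgen hinternal hK hweak ha in
theorem lemR : ∀ (q : List (Fin m)) (b : Fin K → A) (nb : Fin K → ℕ), GoodB x Agr b nb →
    hkPoly (K+1) hk α b * monApply x q a
      ∈ Submodule.span F (UASet x a ((∑ i, nb i) + q.length)) := by
  intro q
  induction q with
  | nil =>
    intro b nb hb
    simpa [monApply] using hk_mul_a x a Agr hmul hdeg hgen hinternal hK hk α hweak ha b nb hb
  | cons j q' ih =>
    intro b nb hb
    have heq : hkPoly (K+1) hk α b * monApply x (j :: q') a
        = x j * (hkPoly (K+1) hk α b * monApply x q' a)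
          + (hkPoly (K+1) hk α b * x j - x j * hkPoly (K+1) hk α b) * monApply x q' a := by
      rw [monApply_cons]
      noncomm_ring
    rw [heq]
    refine Submodule.add_mem _ ?_ ?_
    · have h1 := UA_xmul x a j (ih b nb hb)
      have harith : (∑ i, nb i) + q'.length + 1 = (∑ i, nb i) + (j :: q').length := by
        simp; omega
      rwa [harith] at h1
    · rw [hkPoly_comm hK hk α b (x j), Finset.sum_mul]
      refine Submodule.sum_mem _ fun i0 _ => ?_
      have hb' : GoodB x Agr (Function.update b i0 (b i0 * x j - x j * b i0))
          (Function.update nb i0 (nb i0 + 1)) := by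
        intro i
        by_cases hi : i = i0
        · subst hi
          rw [Function.update_self, Function.update_self]
          refine ⟨⟨?_, by omega⟩, InLieGen.br (hb i).2 (InLieGen.gen j)⟩
          refine Submodule.sub_mem _ (hmul _ _ _ ((hb i).1).1 _ (hdeg j)) ?_
          have := hmul _ _ _ (hdeg j) _ ((hb i).1).1
          rwa [add_comm] at this
        · rw [Function.update_of_ne hi, Function.update_of_ne hi]
          exact hb i
      have h2 := ih _ _ hb'
      have hsum : ∑ i, Function.update nb i0 (nb i0 + 1) i = (∑ i, nb i) + 1 := by
        rw [Finset.sum_update_of_mem (Finset.mem_univ i0)]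
        have h3 := Finset.sum_update_of_mem (Finset.mem_univ i0) nb (nb i0)
        rw [Function.update_eq_self] at h3
        omega
      rw [hsum] at h2
      have harith : (∑ i, nb i) + 1 + q'.length = (∑ i, nb i) + (j :: q').length := by
        simp; omega
      rwa [harith] at h2

/-- homogenized generators of the two-sided ideal `M` -/
def GHSet : Set A := {z | ∃ (b : Fin K → A) (nb : Fin K → ℕ), GoodB x Agr b nb ∧
  (z = hkPoly (K+1) hk α b
   ∨ (∃ l1 : List (Fin m), l1 ≠ [] ∧ z = monL x l1 * hkPoly (K+1) hk α b)
   ∨ (∃ l2 : List (Fin m), l2 ≠ [] ∧ z = hkPoly (K+1) hk α b * monL x l2)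
   ∨ (∃ l1 l2 : List (Fin m), l1 ≠ [] ∧ l2 ≠ [] ∧
        z = monL x l1 * hkPoly (K+1) hk α b * monL x l2))}

include hmul hdeg in
theorem GH_homog : ∀ z ∈ GHSet x Agr hk α, ∃ D, z ∈ Agr D := by
  rintro z ⟨b, nb, hb, hforms⟩
  have hh : hkPoly (K+1) hk α b ∈ Agr (∑ i, nb i) :=
    hkPoly_mem Agr hmul hk α b nb (fun i => ((hb i).1).1)
  rcases hforms with rfl | ⟨l1, h1, rfl⟩ | ⟨l2, h2, rfl⟩ | ⟨l1, l2, h1, h2, rfl⟩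
  · exact ⟨_, hh⟩
  · exact ⟨_, hmul _ _ _ (monL_mem x Agr hmul hdeg h1) _ hh⟩
  · exact ⟨_, hmul _ _ _ hh _ (monL_mem x Agr hmul hdeg h2)⟩
  · exact ⟨_, hmul _ _ _ (hmul _ _ _ (monL_mem x Agr hmul hdeg h1) _ hh) _
      (monL_mem x Agr hmul hdeg h2)⟩

theorem GH_lmul {u w : A} (hu : u ∈ Submodule.span F (MgeSet x 1))
    (hw : w ∈ Submodule.span F (GHSet x Agr hk α)) :
    u * w ∈ Submodule.span F (GHSet x Agr hk α) := by
  induction hu using Submodule.span_induction with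
  | mem u hu =>
    obtain ⟨l, hl, _, rfl⟩ := hu
    induction hw using Submodule.span_induction with
    | mem w hw =>
      obtain ⟨b, nb, hb, hforms⟩ := hw
      refine Submodule.subset_span ?_
      rcases hforms with rfl | ⟨l1, h1, rfl⟩ | ⟨l2, h2, rfl⟩ | ⟨l1, l2, h1, h2, rfl⟩
      · exact ⟨b, nb, hb, Or.inr (Or.inl ⟨l, hl, rfl⟩)⟩
      · refine ⟨b, nb, hb, Or.inr (Or.inl ⟨l ++ l1, by simp [hl], ?_⟩)⟩
        rw [monL_append x hl h1, mul_assoc]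
      · refine ⟨b, nb, hb, Or.inr (Or.inr (Or.inr ⟨l, l2, hl, h2, ?_⟩))⟩
        rw [mul_assoc]
      · refine ⟨b, nb, hb, Or.inr (Or.inr (Or.inr ⟨l ++ l1, l2, by simp [hl], h2, ?_⟩))⟩
        rw [monL_append x hl h1, mul_assoc, mul_assoc, mul_assoc]
    | zero => rw [mul_zero]; exact Submodule.zero_mem _
    | add v w _ _ ihv ihw => rw [mul_add]; exact Submodule.add_mem _ ihv ihw
    | smul c v _ ihv => rw [mul_smul_comm]; exact Submodule.smul_mem _ _ ihv
  | zero => rw [zero_mul]; exact Submodule.zero_mem _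
  | add u v _ _ ihu ihv => rw [add_mul]; exact Submodule.add_mem _ ihu ihv
  | smul c u _ ihu => rw [smul_mul_assoc]; exact Submodule.smul_mem _ _ ihu

theorem GH_rmul {w v : A} (hw : w ∈ Submodule.span F (GHSet x Agr hk α))
    (hv : v ∈ Submodule.span F (MgeSet x 1)) :
    w * v ∈ Submodule.span F (GHSet x Agr hk α) := by
  induction hv using Submodule.span_induction with
  | mem v hv =>
    obtain ⟨l, hl, _, rfl⟩ := hv
    induction hw using Submodule.span_induction with
    | mem w hw =>
      obtain ⟨b, nb, hb, hforms⟩ := hw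
      refine Submodule.subset_span ?_
      rcases hforms with rfl | ⟨l1, h1, rfl⟩ | ⟨l2, h2, rfl⟩ | ⟨l1, l2, h1, h2, rfl⟩
      · exact ⟨b, nb, hb, Or.inr (Or.inr (Or.inl ⟨l, hl, rfl⟩))⟩
      · exact ⟨b, nb, hb, Or.inr (Or.inr (Or.inr ⟨l1, l, h1, hl, rfl⟩))⟩
      · refine ⟨b, nb, hb, Or.inr (Or.inr (Or.inl ⟨l2 ++ l, by simp [h2], ?_⟩))⟩
        rw [monL_append x h2 hl, ← mul_assoc]
      · refine ⟨b, nb, hb, Or.inr (Or.inr (Or.inr ⟨l1, l2 ++ l, h1, by simp [h2], ?_⟩))⟩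
        rw [monL_append x h2 hl, ← mul_assoc]
    | zero => rw [zero_mul]; exact Submodule.zero_mem _
    | add u w _ _ ihu ihw => rw [add_mul]; exact Submodule.add_mem _ ihu ihw
    | smul c u _ ihu => rw [smul_mul_assoc]; exact Submodule.smul_mem _ _ ihu
  | zero => rw [mul_zero]; exact Submodule.zero_mem _
  | add u v _ _ ihu ihv => rw [mul_add]; exact Submodule.add_mem _ ihu ihv
  | smul c u _ ihu => rw [mul_smul_comm]; exact Submodule.smul_mem _ _ ihu

include hmul hdeg hgen in
theorem M_le_GH :
    Submodule.span F { z : A | ∃ b : Fin K → A, (∀ i, InLieGen (F := F) x (b i)) ∧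
      (z = hkPoly (K+1) hk α b ∨ (∃ u : A, z = u * hkPoly (K+1) hk α b) ∨
        (∃ v : A, z = hkPoly (K+1) hk α b * v) ∨
        (∃ u v : A, z = u * hkPoly (K+1) hk α b * v)) }
      ≤ Submodule.span F (GHSet x Agr hk α) := by
  rw [Submodule.span_le]
  rintro z ⟨b, hbLie, hforms⟩
  have hbspan : ∀ i, b i ∈ Submodule.span F (LHSet x Agr) :=
    fun i => lie_homog x Agr hmul hdeg (hbLie i)
  have hmulti := tuple_span (fun b : Fin K → A => hkPoly (K+1) hk α b)
    (fun g i u v => hkPoly_update_add hk α g i u v)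
    (fun g i c u => hkPoly_update_smul hk α g i c u)
    (LHSet x Agr) b hbspan
  have hHV : Submodule.span F {z | ∃ c : Fin K → A, (∀ i, c i ∈ LHSet x Agr) ∧
      z = hkPoly (K+1) hk α c} ≤ Submodule.span F (GHSet x Agr hk α) := by
    rw [Submodule.span_le]
    rintro z ⟨cc, hcc, rfl⟩
    have hcc' : ∀ i, ∃ nv : ℕ, 1 ≤ nv ∧ cc i ∈ Agr nv ∧ InLieGen (F := F) x (cc i) := hcc
    choose nv h1 h2 h3 using hcc'
    exact Submodule.subset_span ⟨cc, nv, fun i => ⟨⟨h2 i, h1 i⟩, h3 i⟩, Or.inl rfl⟩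
  have hh : hkPoly (K+1) hk α b ∈ Submodule.span F (GHSet x Agr hk α) := hHV hmulti
  rcases hforms with rfl | ⟨u, rfl⟩ | ⟨v, rfl⟩ | ⟨u, v, rfl⟩
  · exact hh
  · exact GH_lmul x Agr hk α (gen_mem_span_mge x hgen u) hh
  · exact GH_rmul x Agr hk α hh (gen_mem_span_mge x hgen v)
  · exact GH_rmul x Agr hk α (GH_lmul x Agr hk α (gen_mem_span_mge x hgen u) hh)
      (gen_mem_span_mge x hgen v)

end Main

theorem deg_unique {Agr : ℕ → Submodule F A} (hinternal : DirectSum.IsInternal Agr)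
    {z : A} (hz : z ≠ 0) {i j : ℕ} (hi : z ∈ Agr i) (hj : z ∈ Agr j) : i = j := by
  by_contra hne
  have ind : iSupIndep Agr := hinternal.submodule_iSupIndep
  have hle : Agr j ≤ ⨆ j', ⨆ (_ : j' ≠ i), Agr j' :=
    le_iSup₂ (f := fun j' (_ : j' ≠ i) => Agr j') j (Ne.symm hne)
  exact hz (Submodule.disjoint_def.mp ((ind i).mono_right hle) z hi hj)

theorem prodList_span_mge {m : ℕ} (x : Fin m → A) (hgen : ∀ u : A, InAssocGen (F := F) x u) :
    ∀ (l : List A), l ≠ [] → prodList l ∈ Submodule.span F (MgeSet x l.length) := by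
  intro l
  induction l with
  | nil => simp
  | cons u t ih =>
    intro _
    rcases eq_or_ne t [] with rfl | ht
    · exact gen_mem_span_mge x hgen u
    · rw [prodList_cons u ht]
      have h1 := span_mge_mul x (gen_mem_span_mge x hgen u) (ih ht)
      have h2 : (u :: t).length = 1 + t.length := by simp [Nat.add_comm]
      rw [h2]
      exact h1

end Aux

/-- Lemma 24: in a graded associative algebra `A` generated by degree-one elements
`x_1, …, x_m`, whose Lie subalgebra `L` satisfies the weak identity
`Σ_σ α_σ a_{σ(1)} ⋯ a_{σ(k)} = 0`, if `A^d ⊆ M` (where `M` is the two-sided ideal generated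
by the values of `h_k` on `L`), then for every `a ∈ L` we have
`A^d·a ⊆ span { x_{i₁} ⋯ x_{i_t}·a, x_{i₁} ⋯ x_{i_t}·a·u : t ≤ d-1, u ∈ A }`. -/
theorem graded_algebra_Ad_mul_mem_span
    {F A : Type*} [Field F] [NonUnitalRing A] [Module F A]
    [SMulCommClass F A A] [IsScalarTower F A A]
    (Agr : ℕ → Submodule F A) (h0 : Agr 0 = ⊥)
    (hinternal : DirectSum.IsInternal Agr)
    (hmul : ∀ i j : ℕ, ∀ u ∈ Agr i, ∀ v ∈ Agr j, u * v ∈ Agr (i + j))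
    {m : ℕ} (x : Fin m → A) (hdeg : ∀ i, x i ∈ Agr 1)
    (hgen : ∀ u : A, InAssocGen (F := F) x u)
    (k : ℕ) (hk : 1 ≤ k) (α : Equiv.Perm (Fin k) → F) (hα : α 1 = 1)
    (hweak : ∀ a : Fin k → A, (∀ i, InLieGen (F := F) x (a i)) →
      ∑ σ : Equiv.Perm (Fin k), α σ • prodList (List.ofFn fun i => a (σ i)) = 0)
    (d : ℕ) (hd : 1 ≤ d)
    (hAdM : Submodule.span F { z : A | ∃ l : List A, l.length = d ∧ z = prodList l } ≤
      Submodule.span F { z : A | ∃ b : Fin (k - 1) → A, (∀ i, InLieGen (F := F) x (b i)) ∧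
        (z = hkPoly k hk α b ∨ (∃ u : A, z = u * hkPoly k hk α b) ∨
          (∃ v : A, z = hkPoly k hk α b * v) ∨
          (∃ u v : A, z = u * hkPoly k hk α b * v)) })
    (a : A) (ha : InLieGen (F := F) x a) :
    ∀ w ∈ Submodule.span F { z : A | ∃ l : List A, l.length = d ∧ z = prodList l },
      w * a ∈ Submodule.span F
        { z : A | ∃ l : List (Fin m), l.length ≤ d - 1 ∧
          (z = monApply x l a ∨ ∃ u : A, z = monApply x l a * u) } := by
  classical
  intro w hw
  obtain ⟨K, rfl⟩ : ∃ K, k = K + 1 := ⟨k - 1, by omega⟩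
  by_cases hK : K = 0
  · -- degenerate case: the weak identity forces a = 0
    subst hK
    have hid := hweak (fun _ => a) (fun _ => ha)
    haveI hsub : Subsingleton (Equiv.Perm (Fin 1)) :=
      ⟨fun σ τ => Equiv.ext fun i => Subsingleton.elim _ _⟩
    have huniv : (Finset.univ : Finset (Equiv.Perm (Fin 1))) = {1} :=
      Finset.eq_singleton_iff_unique_mem.mpr
        ⟨Finset.mem_univ _, fun σ _ => Subsingleton.elim σ 1⟩
    rw [huniv, Finset.sum_singleton, hα] at hid
    have hlist : (List.ofFn fun i : Fin 1 => (fun _ : Fin 1 => a) ((1 : Equiv.Perm (Fin 1)) i))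
        = [a] := by simp
    rw [hlist, one_smul] at hid
    have ha0 : a = 0 := hid
    rw [ha0, mul_zero]
    exact Submodule.zero_mem _
  · set T := Submodule.span F
      { z : A | ∃ l : List (Fin m), l.length ≤ d - 1 ∧
        (z = monApply x l a ∨ ∃ u : A, z = monApply x l a * u) } with hT
    have T_rmul : ∀ {w : A}, w ∈ T → ∀ t : A, w * t ∈ T := by
      intro w hw t
      induction hw using Submodule.span_induction with
      | mem z hz =>
        obtain ⟨l, hl, hz⟩ := hz
        rcases hz with rfl | ⟨u, rfl⟩
        · exact Submodule.subset_span ⟨l, hl, Or.inr ⟨t, rfl⟩⟩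
        · exact Submodule.subset_span ⟨l, hl, Or.inr ⟨u * t, by rw [mul_assoc]⟩⟩
      | zero => rw [zero_mul]; exact Submodule.zero_mem _
      | add u v _ _ ihu ihv => rw [add_mul]; exact Submodule.add_mem _ ihu ihv
      | smul c u _ ihu => rw [smul_mul_assoc]; exact Submodule.smul_mem _ _ ihu
    have main : ∀ n : ℕ, ∀ l : List (Fin m), l.length = n → d ≤ n → monL x l * a ∈ T := by
      intro n
      induction n using Nat.strong_induction_on with
      | _ n IH =>
        intro l hl hdn
        have UA_le_T : ∀ {w' : A}, w' ∈ Submodule.span F (UASet x a n) → w' ∈ T := by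
          intro w' hw'
          refine Submodule.span_le.mpr ?_ hw'
          rintro z ⟨l', t, hlen', rfl⟩
          by_cases hc : l'.length ≤ d - 1
          · exact Submodule.subset_span ⟨l', hc, Or.inr ⟨t, rfl⟩⟩
          · have hge : d ≤ l'.length := by omega
            have hne : l' ≠ [] := by rw [← List.length_pos_iff_ne_nil]; omega
            have h1 : monL x l' * a ∈ T := IH l'.length (by omega) l' rfl hge
            rw [monApply_eq x a hne]
            exact T_rmul h1 t
        set l0 := l.take d with hl0
        set rest := l.drop d with hrest0
        have hl0len : l0.length = d := by rw [hl0, List.length_take]; omega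
        have hl0ne : l0 ≠ [] := by rw [← List.length_pos_iff_ne_nil]; omega
        have hsplit : l0 ++ rest = l := List.take_append_drop d l
        have hrestlen : d + rest.length = n := by
          have := congrArg List.length hsplit
          rw [List.length_append] at this
          omega
        have hXa : monL x l * a = monL x l0 * monApply x rest a := by
          rcases eq_or_ne rest [] with hre | hre
          · rw [← hsplit, hre, List.append_nil]; rfl
          · rw [← hsplit, monL_append x hl0ne hre, mul_assoc, ← monApply_eq x a hre]
        have hY1 : monL x l0 ∈ Agr d := by
          rw [← hl0len]; exact monL_mem x Agr hmul hdeg hl0ne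
        have hY2 : monL x l0 ∈ Submodule.span F
            { z : A | ∃ lA : List A, lA.length = d ∧ z = prodList lA } :=
          Submodule.subset_span ⟨l0.map x, by simp [hl0len], rfl⟩
        have hY4 : monL x l0 ∈ Submodule.span F (GHSet x Agr hk α) :=
          M_le_GH x Agr hmul hdeg hgen hk α (hAdM hY2)
        have hY5 : monL x l0 ∈ Submodule.span F
            (GHSet x Agr hk α ∩ {z | z ∈ Agr d}) :=
          mem_span_homog Agr hinternal _ (GH_homog x Agr hmul hdeg hk α) hY4 hY1
        have hper : ∀ z ∈ GHSet x Agr hk α ∩ {z | z ∈ Agr d},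
            z * monApply x rest a ∈ T := by
          rintro z ⟨hzGH, hzAgr⟩
          by_cases hz0 : z = 0
          · rw [hz0, zero_mul]; exact Submodule.zero_mem _
          obtain ⟨b, nb, hb, hforms⟩ := hzGH
          have hhmem : hkPoly (K+1) hk α b ∈ Agr (∑ i, nb i) :=
            hkPoly_mem Agr hmul hk α b nb (fun i => ((hb i).1).1)
          rcases hforms with rfl | ⟨l1, h1, rfl⟩ | ⟨l2, h2, rfl⟩ | ⟨l1, l2, h1, h2, rfl⟩
          · have hDeq : (∑ i, nb i) = d := deg_unique hinternal hz0 hhmem hzAgr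
            have hR := lemR x a Agr hmul hdeg hgen hinternal hK hk α hweak ha rest b nb hb
            have harith : (∑ i, nb i) + rest.length = n := by omega
            rw [harith] at hR
            exact UA_le_T hR
          · have hD : monL x l1 * hkPoly (K+1) hk α b ∈ Agr (l1.length + ∑ i, nb i) :=
              hmul _ _ _ (monL_mem x Agr hmul hdeg h1) _ hhmem
            have hDeq : l1.length + (∑ i, nb i) = d := deg_unique hinternal hz0 hD hzAgr
            have hR := lemR x a Agr hmul hdeg hgen hinternal hK hk α hweak ha rest b nb hb
            have hl1pos : 1 ≤ l1.length := by
              rw [Nat.succ_le_iff, List.length_pos_iff_ne_nil]; exact h1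
            have hR2 := UA_hmul x a Agr hmul hdeg hgen hinternal hl1pos
              (monL_mem x Agr hmul hdeg h1) hR
            have harith : (∑ i, nb i) + rest.length + l1.length = n := by omega
            rw [harith] at hR2
            rw [mul_assoc]
            exact UA_le_T hR2
          · have hD : hkPoly (K+1) hk α b * monL x l2 ∈ Agr ((∑ i, nb i) + l2.length) :=
              hmul _ _ _ hhmem _ (monL_mem x Agr hmul hdeg h2)
            have hDeq : (∑ i, nb i) + l2.length = d := deg_unique hinternal hz0 hD hzAgr
            have hR := lemR x a Agr hmul hdeg hgen hinternal hK hk α hweak ha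
              (l2 ++ rest) b nb hb
            have harith : (∑ i, nb i) + (l2 ++ rest).length = n := by
              rw [List.length_append]; omega
            rw [harith] at hR
            rw [mul_assoc, monL_monApply x a h2 rest]
            exact UA_le_T hR
          · have hD : monL x l1 * hkPoly (K+1) hk α b * monL x l2
                ∈ Agr (l1.length + (∑ i, nb i) + l2.length) :=
              hmul _ _ _ (hmul _ _ _ (monL_mem x Agr hmul hdeg h1) _ hhmem) _
                (monL_mem x Agr hmul hdeg h2)
            have hDeq : l1.length + (∑ i, nb i) + l2.length = d :=
              deg_unique hinternal hz0 hD hzAgr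
            have hR := lemR x a Agr hmul hdeg hgen hinternal hK hk α hweak ha
              (l2 ++ rest) b nb hb
            have hl1pos : 1 ≤ l1.length := by
              rw [Nat.succ_le_iff, List.length_pos_iff_ne_nil]; exact h1
            have hR2 := UA_hmul x a Agr hmul hdeg hgen hinternal hl1pos
              (monL_mem x Agr hmul hdeg h1) hR
            have harith : (∑ i, nb i) + (l2 ++ rest).length + l1.length = n := by
              rw [List.length_append]; omega
            rw [harith] at hR2
            have hassoc : monL x l1 * hkPoly (K+1) hk α b * monL x l2 * monApply x rest a
                = monL x l1 * (hkPoly (K+1) hk α b * monApply x (l2 ++ rest) a) := by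
              rw [← monL_monApply x a h2 rest, mul_assoc, mul_assoc]
            rw [hassoc]
            exact UA_le_T hR2
        rw [hXa]
        refine Submodule.span_induction
          (p := fun z _ => z * monApply x rest a ∈ T) hper ?_ ?_ ?_ hY5
        · show (0 : A) * monApply x rest a ∈ T
          rw [zero_mul]; exact Submodule.zero_mem _
        · intro u v _ _ ihu ihv
          show (u + v) * monApply x rest a ∈ T
          rw [add_mul]
          exact Submodule.add_mem _ ihu ihv
        · intro c u _ ihu
          show (c • u) * monApply x rest a ∈ T
          rw [smul_mul_assoc]
          exact Submodule.smul_mem _ _ ihu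
    induction hw using Submodule.span_induction with
    | mem z hz =>
      obtain ⟨lA, hlen, rfl⟩ := hz
      have hlne : lA ≠ [] := by rw [← List.length_pos_iff_ne_nil]; omega
      have hP := prodList_span_mge x hgen lA hlne
      rw [hlen] at hP
      refine Submodule.span_induction (p := fun z _ => z * a ∈ T) ?_ ?_ ?_ ?_ hP
      · rintro z ⟨l', hne', hge', rfl⟩
        exact main l'.length l' rfl hge'
      · show (0 : A) * a ∈ T
        rw [zero_mul]; exact Submodule.zero_mem _
      · intro u v _ _ ihu ihv
        show (u + v) * a ∈ T
        rw [add_mul]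
        exact Submodule.add_mem _ ihu ihv
      · intro c u _ ihu
        show (c • u) * a ∈ T
        rw [smul_mul_assoc]
        exact Submodule.smul_mem _ _ ihu
    | zero => rw [zero_mul]; exact Submodule.zero_mem _
    | add u v _ _ ihu ihv => rw [add_mul]; exact Submodule.add_mem _ ihu ihv
    | smul c u _ ihu => rw [smul_mul_assoc]; exact Submodule.smul_mem _ _ ihu
end

section
/- Let L be a Lie algebra over a field F of characteristic p > 0 and let I be a Lie ideal of L whose centralizer in L is zero, i.e., the only element x ∈ L with ⁅x, y⁆ = 0 for all y ∈ I is x = 0. Let a ∈ I satisfy ⁅⁅x, a⁆, a⁆ = 0 for all x ∈ I. Then ad(a)^p = 0 as an operator on L (in fact ⁅⁅x, a⁆, a⁆ = 0 for all x ∈ L when p = 2, and ad(a)^3 = 0 when p ≥ 3). -/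
/-- Lemma 30: over a field of characteristic `p > 0`, if `I` is a Lie ideal of `L` with zero
centralizer and `a ∈ I` satisfies `⁅⁅x, a⁆, a⁆ = 0` for all `x ∈ I`, then `ad(a)^p = 0` on `L`
(indeed `⁅⁅x, a⁆, a⁆ = 0` for all `x ∈ L` when `p = 2`, and `ad(a)^3 = 0` when `p ≥ 3`). -/
theorem ad_pow_p_eq_zero_of_sandwich_in_ideal
    {F : Type*} {L : Type*} [Field F] [LieRing L] [LieAlgebra F L]
    (p : ℕ) [CharP F p] (hp : 0 < p)
    (I : LieIdeal F L)
    (hcent : ∀ x : L, (∀ y ∈ I, ⁅x, y⁆ = 0) → x = 0)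
    (a : L) (ha : a ∈ I) (haa : ∀ x ∈ I, ⁅⁅x, a⁆, a⁆ = 0) :
    (LieAlgebra.ad F L a) ^ p = 0 ∧
      (p = 2 → ∀ x : L, ⁅⁅x, a⁆, a⁆ = 0) ∧
      (3 ≤ p → (LieAlgebra.ad F L a) ^ 3 = 0) := by
  haveI : NeZero p := ⟨hp.ne'⟩
  have hprime : p.Prime := @Fact.out _ (CharP.char_is_prime_of_pos F p)
  have swap : ∀ u : L, ⁅⁅u, a⁆, a⁆ = ⁅a, ⁅a, u⁆⁆ := fun u => by
    rw [← lie_skew ⁅u, a⁆ a, ← lie_skew u a, lie_neg, neg_neg]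
  -- rewrite the sandwich condition with brackets on the left
  have hsq : ∀ u ∈ I, ⁅a, ⁅a, u⁆⁆ = 0 := by
    intro u hu
    rw [← swap u]
    exact haa u hu
  -- cube of ad a vanishes
  have h3 : ∀ x : L, ⁅a, ⁅a, ⁅a, x⁆⁆⁆ = 0 := fun x =>
    hsq ⁅a, x⁆ (lie_mem_left F L I a x ha)
  have h3' : (LieAlgebra.ad F L a) ^ 3 = 0 := by
    ext x
    simp [pow_succ, Module.End.mul_apply, LieAlgebra.ad_apply, h3 x]
  -- char 2 case
  have h2 : p = 2 → ∀ x : L, ⁅a, ⁅a, x⁆⁆ = 0 := by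
    intro hp2 x
    apply hcent
    intro y hy
    have hxy : ⁅a, ⁅a, ⁅x, y⁆⁆⁆ = 0 := hsq ⁅x, y⁆ (lie_mem_right F L I x y hy)
    have hy2 : ⁅a, ⁅a, y⁆⁆ = 0 := hsq y hy
    have expand : ⁅⁅a, ⁅a, x⁆⁆, y⁆ =
        ⁅a, ⁅a, ⁅x, y⁆⁆⁆ + ⁅x, ⁅a, ⁅a, y⁆⁆⁆
          - (⁅a, ⁅x, ⁅a, y⁆⁆⁆ + ⁅a, ⁅x, ⁅a, y⁆⁆⁆) := by
      simp only [lie_lie, lie_sub, sub_lie, lie_add, add_lie]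
      abel
    have h2F : (2 : F) = 0 := by
      have := CharP.cast_eq_zero F p
      rw [hp2] at this
      exact_mod_cast this
    have hdouble : ⁅a, ⁅x, ⁅a, y⁆⁆⁆ + ⁅a, ⁅x, ⁅a, y⁆⁆⁆ = 0 := by
      rw [← two_smul F, h2F, zero_smul]
    rw [expand, hxy, hy2, lie_zero, hdouble]
    simp
  have h2' : p = 2 → ∀ x : L, ⁅⁅x, a⁆, a⁆ = 0 := by
    intro hp2 x
    rw [swap x]
    exact h2 hp2 x
  refine ⟨?_, h2', fun _ => h3'⟩
  rcases eq_or_lt_of_le hprime.two_le with h | h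
  · subst h
    ext x
    simp [pow_succ, Module.End.mul_apply, LieAlgebra.ad_apply, h2 rfl x]
  · exact pow_eq_zero_of_le h h3'
end
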